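/- arXiv:2412.18949 — 2 statements merged into one kernel-verified Lean document; each statement's English description precedes it below -/
import Mathlib

section
/- For a nonempty finite metric space X, an integer n with 2 ≤ n ≤ #X, and real λ ≥ 2·diam X, one has 2·d_GH(λΔₙ, X) = λ − αₙ(X), where αₙ(X) = sup over partitions D of X into n nonempty parts of α(D). -/
/-- `Δ` is a simplex of cardinality `n` and non-zero distance `l`. -/
def IsSimplexOf (Δ : Type) [MetricSpace Δ] [Fintype Δ] (n : ℕ) (l : ℝ) : Prop :=
  Fintype.card Δ = n ∧ ∀ x y : Δ, x ≠ y → dist x y = l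

/-- The distance between two subsets of a metric space. -/
noncomputable def setDist {X : Type} [MetricSpace X] (A B : Set X) : ℝ :=
  sInf {d | ∃ a ∈ A, ∃ b ∈ B, dist a b = d}

/-- The value `α(D)` of the partition of `X` into the fibers of `f : X → Fin n`:
the infimum of the distances between distinct parts. -/
noncomputable def partAlpha {X : Type} [MetricSpace X] {n : ℕ} (f : X → Fin n) : ℝ :=
  sInf {d | ∃ i j : Fin n, i ≠ j ∧ d = setDist (f ⁻¹' {i}) (f ⁻¹' {j})}

/-- `αₙ(X)`: the supremum of `α(D)` over all partitions `D` of `X` into `n`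
nonempty parts (encoded as surjections `X → Fin n`). -/
noncomputable def alphaN (X : Type) [MetricSpace X] (n : ℕ) : ℝ :=
  sSup {a | ∃ f : X → Fin n, Function.Surjective f ∧ a = partAlpha f}

open Metric Set Function GromovHausdorff

section auxlemmas

variable {X : Type} [MetricSpace X]

lemma setDist_nonneg' (A B : Set X) : 0 ≤ setDist A B := by
  apply Real.sInf_nonneg
  rintro d ⟨a, _, b, _, rfl⟩
  exact dist_nonneg

lemma setDist_le_dist {A B : Set X} {a b : X} (ha : a ∈ A) (hb : b ∈ B) :
    setDist A B ≤ dist a b := by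
  apply csInf_le
  · exact ⟨0, by rintro d ⟨a, _, b, _, rfl⟩; exact dist_nonneg⟩
  · exact ⟨a, ha, b, hb, rfl⟩

lemma le_setDist' {A B : Set X} (hA : A.Nonempty) (hB : B.Nonempty) {c : ℝ}
    (h : ∀ a ∈ A, ∀ b ∈ B, c ≤ dist a b) : c ≤ setDist A B := by
  obtain ⟨a, ha⟩ := hA
  obtain ⟨b, hb⟩ := hB
  have hne : {d | ∃ a ∈ A, ∃ b ∈ B, dist a b = d}.Nonempty := ⟨dist a b, a, ha, b, hb, rfl⟩
  refine le_csInf hne ?_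
  rintro d ⟨a', ha', b', hb', rfl⟩
  exact h a' ha' b' hb'

lemma partAlpha_le_setDist {n : ℕ} (f : X → Fin n) {i j : Fin n} (hij : i ≠ j) :
    partAlpha f ≤ setDist (f ⁻¹' {i}) (f ⁻¹' {j}) := by
  apply csInf_le
  · exact ⟨0, by rintro d ⟨i, j, hij, rfl⟩; exact setDist_nonneg' _ _⟩
  · exact ⟨i, j, hij, rfl⟩

lemma partAlpha_nonneg {n : ℕ} (f : X → Fin n) : 0 ≤ partAlpha f := by
  apply Real.sInf_nonneg
  rintro d ⟨i, j, hij, rfl⟩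
  exact setDist_nonneg' _ _

lemma two_distinct_fin {n : ℕ} (hn2 : 2 ≤ n) :
    ∃ i j : Fin n, i ≠ j := by
  refine ⟨⟨0, by omega⟩, ⟨1, by omega⟩, ?_⟩
  simp [Fin.ext_iff]

lemma le_partAlpha {n : ℕ} (hn2 : 2 ≤ n) (f : X → Fin n) {c : ℝ}
    (h : ∀ i j : Fin n, i ≠ j → c ≤ setDist (f ⁻¹' {i}) (f ⁻¹' {j})) :
    c ≤ partAlpha f := by
  obtain ⟨i, j, hij⟩ := two_distinct_fin hn2
  have hne : {d | ∃ i j : Fin n, i ≠ j ∧ d = setDist (f ⁻¹' {i}) (f ⁻¹' {j})}.Nonempty :=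
    ⟨setDist (f ⁻¹' {i}) (f ⁻¹' {j}), i, j, hij, rfl⟩
  refine le_csInf hne ?_
  rintro d ⟨i', j', hij', rfl⟩
  exact h i' j' hij'

lemma partAlpha_le_diam [Fintype X] [Nonempty X] {n : ℕ} (hn2 : 2 ≤ n) {f : X → Fin n}
    (hf : Surjective f) : partAlpha f ≤ diam (univ : Set X) := by
  obtain ⟨i, j, hij⟩ := two_distinct_fin hn2
  obtain ⟨a, ha⟩ := hf i
  obtain ⟨b, hb⟩ := hf j
  refine le_trans (partAlpha_le_setDist f hij) ?_
  refine le_trans (setDist_le_dist (a := a) (b := b) ?_ ?_) ?_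
  · simp [ha]
  · simp [hb]
  · exact dist_le_diam_of_mem (Set.finite_univ.isBounded) (mem_univ a) (mem_univ b)

lemma exists_surjection [Fintype X] {n : ℕ} (hn2 : 2 ≤ n) (hn : n ≤ Fintype.card X) :
    ∃ f : X → Fin n, Surjective f := by
  let e := Fintype.equivFin X
  refine ⟨fun x => if h : (e x : ℕ) < n then ⟨e x, h⟩ else ⟨0, by omega⟩, ?_⟩
  intro i
  refine ⟨e.symm ⟨i, lt_of_lt_of_le i.2 hn⟩, ?_⟩
  simp only [Equiv.apply_symm_apply]
  rw [dif_pos (by exact i.2)]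

lemma bddAbove_alphaSet [Fintype X] [Nonempty X] {n : ℕ} (hn2 : 2 ≤ n) :
    BddAbove {a | ∃ f : X → Fin n, Function.Surjective f ∧ a = partAlpha f} := by
  refine ⟨diam (univ : Set X), ?_⟩
  rintro a ⟨f, hf, rfl⟩
  exact partAlpha_le_diam hn2 hf

end auxlemmas

/-- Disjoint union of `Δ` and `X`, as a type on which we install a custom metric. -/
inductive Glued (Δ X : Type) : Type where
  | left : Δ → Glued Δ X
  | right : X → Glued Δ X

/-- The glued distance on `Glued Δ X` depending on a labelling `e`, a partition `f`
and a gluing constant `c`. -/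
noncomputable def gdist {Δ X : Type} [MetricSpace Δ] [MetricSpace X] {n : ℕ}
    (e : Δ ≃ Fin n) (f : X → Fin n) (c : ℝ) : Glued Δ X → Glued Δ X → ℝ
  | .left p, .left q => dist p q
  | .left p, .right x => c + Metric.infDist x (f ⁻¹' {e p})
  | .right x, .left p => c + Metric.infDist x (f ⁻¹' {e p})
  | .right x, .right y => dist x y

section main

variable (X Δ : Type) [MetricSpace X] [Fintype X] [Nonempty X]
  [MetricSpace Δ] [Fintype Δ] [Nonempty Δ]

lemma l_pos {n : ℕ} {l : ℝ} (hΔ : IsSimplexOf Δ n l) (hn2 : 2 ≤ n) : 0 < l := by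
  have hcard : 1 < Fintype.card Δ := by rw [hΔ.1]; omega
  obtain ⟨p, q, hpq⟩ := Fintype.exists_pair_of_one_lt_card hcard
  have := hΔ.2 p q hpq
  have := dist_pos.2 hpq
  linarith

lemma upper_bound {n : ℕ} {l : ℝ} (hΔ : IsSimplexOf Δ n l) (hn2 : 2 ≤ n)
    (hl : 2 * Metric.diam (Set.univ : Set X) ≤ l)
    {f : X → Fin n} (hf : Function.Surjective f) :
    2 * GromovHausdorff.ghDist Δ X ≤ l - partAlpha f := by
  classical
  set a := partAlpha f with ha_def
  set c := (l - a) / 2 with hc_def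
  have hD0 : 0 ≤ diam (univ : Set X) := diam_nonneg
  have hlpos : 0 < l := l_pos Δ hΔ hn2
  have ha0 : 0 ≤ a := partAlpha_nonneg f
  have haD : a ≤ diam (univ : Set X) := partAlpha_le_diam hn2 hf
  have hDla : diam (univ : Set X) ≤ l - a := by linarith
  have hcpos : 0 < c := by
    have : a ≤ l / 2 := by linarith
    simp only [hc_def]
    linarith
  let e : Δ ≃ Fin n := Fintype.equivFinOfCardEq hΔ.1
  have hpart_ne : ∀ i : Fin n, (f ⁻¹' {i}).Nonempty := by
    intro i; obtain ⟨x, hx⟩ := hf i; exact ⟨x, by simp [hx]⟩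
  have hmin : ∀ (x : X) (i : Fin n), ∃ y ∈ f ⁻¹' {i},
      Metric.infDist x (f ⁻¹' {i}) = dist x y :=
    fun x i => (Set.toFinite _).isCompact.exists_infDist_eq_dist (hpart_ne i) x
  -- key: for distinct labels, sum of infDists is at least `a`
  have hkey : ∀ (p q : Δ), p ≠ q → ∀ x : X,
      a ≤ Metric.infDist x (f ⁻¹' {e p}) + Metric.infDist x (f ⁻¹' {e q}) := by
    intro p q hpq x
    obtain ⟨y, hy, hy'⟩ := hmin x (e p)
    obtain ⟨y', hy'', hy'''⟩ := hmin x (e q)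
    have hepq : (e p : Fin n) ≠ e q := fun h => hpq (e.injective h)
    have h1 : a ≤ setDist (f ⁻¹' {e p}) (f ⁻¹' {e q}) := partAlpha_le_setDist f hepq
    have h2 : setDist (f ⁻¹' {e p}) (f ⁻¹' {e q}) ≤ dist y y' := setDist_le_dist hy hy''
    have h3 : dist y y' ≤ dist y x + dist x y' := dist_triangle y x y'
    rw [hy', hy''', dist_comm y x] at *
    linarith
  -- infDist comparisons between different parts
  have hshift : ∀ (p q : Δ) (x : X),
      Metric.infDist x (f ⁻¹' {e p}) ≤ l + Metric.infDist x (f ⁻¹' {e q}) := by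
    intro p q x
    obtain ⟨y, hy, _⟩ := hmin x (e p)
    obtain ⟨y', hy'', hy'''⟩ := hmin x (e q)
    have h1 : Metric.infDist x (f ⁻¹' {e p}) ≤ dist x y := Metric.infDist_le_dist_of_mem hy
    have h2 : dist x y ≤ dist x y' + dist y' y := dist_triangle x y' y
    have h3 : dist y' y ≤ diam (univ : Set X) :=
      dist_le_diam_of_mem Set.finite_univ.isBounded (mem_univ y') (mem_univ y)
    rw [hy''']
    linarith
  letI Zmet : MetricSpace (Glued Δ X) :=
    { dist := gdist e f c
      dist_self := by
        rintro (p | x)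
        · exact dist_self p
        · exact dist_self x
      dist_comm := by
        rintro (p | x) (q | y)
        · exact dist_comm p q
        · rfl
        · rfl
        · exact dist_comm x y
      dist_triangle := by
        rintro (p | x) (q | y) (r | z)
        · exact dist_triangle p q r
        · -- left p to right z via left q
          show c + Metric.infDist z (f ⁻¹' {e p}) ≤ dist p q +
            (c + Metric.infDist z (f ⁻¹' {e q}))
          rcases eq_or_ne p q with rfl | hpq
          · rw [dist_self]; linarith
          · rw [hΔ.2 p q hpq]
            have := hshift p q z
            linarith
        · -- left p to left r via right y
          show dist p r ≤ (c + Metric.infDist y (f ⁻¹' {e p})) +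
            (c + Metric.infDist y (f ⁻¹' {e r}))
          rcases eq_or_ne p r with rfl | hpr
          · have h1 := Metric.infDist_nonneg (s := f ⁻¹' {e p}) (x := y)
            rw [dist_self]
            linarith
          · rw [hΔ.2 p r hpr]
            have := hkey p r hpr y
            simp only [hc_def]
            linarith
        · -- left p to right z via right y
          show c + Metric.infDist z (f ⁻¹' {e p}) ≤
            (c + Metric.infDist y (f ⁻¹' {e p})) + dist y z
          have := Metric.infDist_le_infDist_add_dist (x := z) (y := y) (s := f ⁻¹' {e p})
          rw [dist_comm z y] at this
          linarith
        · -- right x to left r via left q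
          show c + Metric.infDist x (f ⁻¹' {e r}) ≤
            (c + Metric.infDist x (f ⁻¹' {e q})) + dist q r
          rcases eq_or_ne q r with rfl | hqr
          · rw [dist_self]; linarith
          · rw [hΔ.2 q r hqr]
            have := hshift r q x
            linarith
        · -- right x to right z via left q
          show dist x z ≤ (c + Metric.infDist x (f ⁻¹' {e q})) +
            (c + Metric.infDist z (f ⁻¹' {e q}))
          obtain ⟨u, hu, hu'⟩ := hmin x (e q)
          obtain ⟨v, hv, hv'⟩ := hmin z (e q)
          have h1 : dist x z ≤ dist x u + dist u v + dist v z := by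
            have t1 := dist_triangle x u z
            have t2 := dist_triangle u v z
            linarith
          have h2 : dist u v ≤ diam (univ : Set X) :=
            dist_le_diam_of_mem Set.finite_univ.isBounded (mem_univ u) (mem_univ v)
          have h3 : dist v z = dist z v := dist_comm v z
          rw [hu', hv']
          simp only [hc_def]
          linarith
        · -- right x to left r via right y
          show c + Metric.infDist x (f ⁻¹' {e r}) ≤ dist x y +
            (c + Metric.infDist y (f ⁻¹' {e r}))
          have := Metric.infDist_le_infDist_add_dist (x := x) (y := y) (s := f ⁻¹' {e r})
          linarith
        · exact dist_triangle x y z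
      eq_of_dist_eq_zero := by
        rintro (p | x) (q | y) h
        · rw [eq_of_dist_eq_zero h]
        · exfalso
          have h1 := Metric.infDist_nonneg (s := f ⁻¹' {e p}) (x := y)
          have h' : c + Metric.infDist y (f ⁻¹' {e p}) = 0 := h
          clear h
          linarith
        · exfalso
          have h1 := Metric.infDist_nonneg (s := f ⁻¹' {e q}) (x := x)
          have h' : c + Metric.infDist x (f ⁻¹' {e q}) = 0 := h
          clear h
          linarith
        · rw [eq_of_dist_eq_zero h] }
  have isomL : Isometry (Glued.left : Δ → Glued Δ X) := Isometry.of_dist_eq fun _ _ => rfl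
  have isomR : Isometry (Glued.right : X → Glued Δ X) := Isometry.of_dist_eq fun _ _ => rfl
  have hHD : hausdorffDist (range (Glued.left : Δ → Glued Δ X))
      (range (Glued.right : X → Glued Δ X)) ≤ c := by
    apply hausdorffDist_le_of_mem_dist hcpos.le
    · rintro z ⟨p, rfl⟩
      obtain ⟨y, hy⟩ := hpart_ne (e p)
      refine ⟨Glued.right y, mem_range_self y, ?_⟩
      show c + Metric.infDist y (f ⁻¹' {e p}) ≤ c
      rw [Metric.infDist_zero_of_mem hy]
      linarith
    · rintro z ⟨x, rfl⟩
      refine ⟨Glued.left (e.symm (f x)), mem_range_self _, ?_⟩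
      show c + Metric.infDist x (f ⁻¹' {e (e.symm (f x))}) ≤ c
      rw [e.apply_symm_apply, Metric.infDist_zero_of_mem (by simp)]
      linarith
  have hgh : GromovHausdorff.ghDist Δ X ≤
      hausdorffDist (range (Glued.left : Δ → Glued Δ X))
        (range (Glued.right : X → Glued Δ X)) :=
    GromovHausdorff.ghDist_le_hausdorffDist isomL isomR
  have : GromovHausdorff.ghDist Δ X ≤ c := le_trans hgh hHD
  simp only [hc_def] at this
  linarith

lemma lower_bound {n : ℕ} {l : ℝ} (hΔ : IsSimplexOf Δ n l) (hn2 : 2 ≤ n)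
    (hn : n ≤ Fintype.card X) :
    l - alphaN X n ≤ 2 * GromovHausdorff.ghDist Δ X := by
  classical
  set ι := optimalGHInjl Δ X
  set κ := optimalGHInjr Δ X
  have hιi : Isometry ι := isometry_optimalGHInjl Δ X
  have hκi : Isometry κ := isometry_optimalGHInjr Δ X
  set H := GromovHausdorff.ghDist Δ X with hHdef
  have hHD : hausdorffDist (range ι) (range κ) = H := hausdorffDist_optimal
  have hH0 : 0 ≤ H := by
    rw [← hHD]; exact hausdorffDist_nonneg
  have halpha0 : 0 ≤ alphaN X n := by
    obtain ⟨f, hf⟩ := exists_surjection hn2 hn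
    refine le_trans (partAlpha_nonneg f) ?_
    exact le_csSup (bddAbove_alphaSet hn2) ⟨f, hf, rfl⟩
  by_cases hcase : l ≤ 2 * H
  · linarith
  push_neg at hcase
  -- the ranges are compact nonempty with finite Hausdorff edistance
  have hcι : IsCompact (range ι) := isCompact_range hιi.continuous
  have hcκ : IsCompact (range κ) := isCompact_range hκi.continuous
  have hfin : EMetric.hausdorffEdist (range ι) (range κ) ≠ ⊤ :=
    hausdorffEdist_ne_top_of_nonempty_of_bounded (range_nonempty ι) (range_nonempty κ)
      hcι.isBounded hcκ.isBounded
  have hfin' : EMetric.hausdorffEdist (range κ) (range ι) ≠ ⊤ := by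
    rwa [EMetric.hausdorffEdist, EMetric.hausdorffEdist_comm]
  -- choose, for each x, a nearest simplex point
  have hchoose : ∀ x : X, ∃ p : Δ, dist (ι p) (κ x) ≤ H := by
    intro x
    have h1 : Metric.infDist (κ x) (range ι) ≤ H := by
      rw [← hHD, hausdorffDist_comm]
      exact Metric.infDist_le_hausdorffDist_of_mem (mem_range_self x) hfin'
    obtain ⟨z, ⟨p, rfl⟩, hz⟩ := hcι.exists_infDist_eq_dist (range_nonempty ι) (κ x)
    exact ⟨p, by rw [dist_comm, ← hz]; exact h1⟩
  choose F hF using hchoose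
  have huniq : ∀ (p : Δ) (x : X), dist (ι p) (κ x) ≤ H → F x = p := by
    intro p x hpx
    by_contra hne
    have h1 : dist (ι (F x)) (ι p) = l := by
      rw [hιi.dist_eq]; exact hΔ.2 _ _ hne
    have h2 : dist (ι (F x)) (ι p) ≤ dist (ι (F x)) (κ x) + dist (κ x) (ι p) :=
      dist_triangle _ _ _
    rw [dist_comm (κ x) (ι p)] at h2
    have := hF x
    linarith
  have hFsurj : Surjective F := by
    intro p
    have h1 : Metric.infDist (ι p) (range κ) ≤ H := by
      rw [← hHD]
      exact Metric.infDist_le_hausdorffDist_of_mem (mem_range_self p) hfin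
    obtain ⟨z, ⟨x, rfl⟩, hz⟩ := hcκ.exists_infDist_eq_dist (range_nonempty κ) (ι p)
    exact ⟨x, huniq p x (by rw [← hz]; exact h1)⟩
  let e : Δ ≃ Fin n := Fintype.equivFinOfCardEq hΔ.1
  let f : X → Fin n := e ∘ F
  have hfsurj : Surjective f := e.surjective.comp hFsurj
  have hdistlow : ∀ x y : X, F x ≠ F y → l - 2 * H ≤ dist x y := by
    intro x y hxy
    have h1 : dist (ι (F x)) (ι (F y)) = l := by
      rw [hιi.dist_eq]; exact hΔ.2 _ _ hxy
    have h2 : dist (ι (F x)) (ι (F y)) ≤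
        dist (ι (F x)) (κ x) + dist (κ x) (κ y) + dist (κ y) (ι (F y)) := by
      have t1 := dist_triangle (ι (F x)) (κ x) (ι (F y))
      have t2 := dist_triangle (κ x) (κ y) (ι (F y))
      linarith
    rw [hκi.dist_eq, dist_comm (κ y) (ι (F y))] at h2
    have h3 := hF x
    have h4 := hF y
    linarith
  have hpa : l - 2 * H ≤ partAlpha f := by
    apply le_partAlpha hn2
    intro i j hij
    apply le_setDist'
    · obtain ⟨x, hx⟩ := hfsurj i; exact ⟨x, by simp [hx]⟩
    · obtain ⟨y, hy⟩ := hfsurj j; exact ⟨y, by simp [hy]⟩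
    · intro x hx y hy
      apply hdistlow
      intro hFeq
      apply hij
      have : f x = f y := by simp only [f, comp_apply, hFeq]
      rw [← hx, ← hy] at *
      exact this
  have hmem : partAlpha f ≤ alphaN X n := le_csSup (bddAbove_alphaSet hn2) ⟨f, hfsurj, rfl⟩
  linarith

end main

/-- For a nonempty finite metric space `X`, `2 ≤ n ≤ #X` and `l ≥ 2 diam X`,
`2 d_GH(lΔₙ, X) = l − αₙ(X)`. -/
theorem two_ghDist_simplex_of_big_lambda (X Δ : Type) [MetricSpace X] [Fintype X]
    [Nonempty X] [MetricSpace Δ] [Fintype Δ] [Nonempty Δ] (n : ℕ) (l : ℝ)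
    (hΔ : IsSimplexOf Δ n l) (hn2 : 2 ≤ n) (hn : n ≤ Fintype.card X)
    (hl : 2 * Metric.diam (Set.univ : Set X) ≤ l) :
    2 * GromovHausdorff.ghDist Δ X = l - alphaN X n := by
  have hlow := lower_bound X Δ hΔ hn2 hn
  have hup : 2 * GromovHausdorff.ghDist Δ X ≤ l - alphaN X n := by
    have hS : alphaN X n ≤ l - 2 * GromovHausdorff.ghDist Δ X := by
      apply csSup_le
      · obtain ⟨f, hf⟩ := exists_surjection hn2 hn
        exact ⟨_, f, hf, rfl⟩
      · rintro a ⟨f, hf, rfl⟩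
        have := upper_bound X Δ hΔ hn2 hl hf
        linarith
    linarith
  linarith
end

section
/- If X and Y are finite metric spaces such that d_GH(λΔₙ, X) = d_GH(λΔₙ, Y) for all positive integers n and all λ ≥ 0, then #X = #Y, diam X = diam Y, and the mst-spectra of X and Y coincide. -/
open Metric SimpleGraph Set Function

/-- The multiset of edge lengths of a graph `G` on a finite metric space `V`. -/
noncomputable def edgeLengths {V : Type} [MetricSpace V] [Fintype V] (G : SimpleGraph V) :
    Multiset ℝ :=
  (G.edgeSet.toFinite.toFinset).val.map
    (Sym2.lift ⟨fun x y => dist x y, fun _ _ => dist_comm _ _⟩)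

/-- The length of a graph `G` on a finite metric space: the sum of the lengths of its edges. -/
noncomputable def graphLength {V : Type} [MetricSpace V] [Fintype V] (G : SimpleGraph V) : ℝ :=
  (edgeLengths G).sum

/-- `G` is a minimal spanning tree on the finite metric space `V`: a tree with vertex set `V`
whose length is minimal among all such trees. -/
def IsMST {V : Type} [MetricSpace V] [Fintype V] (G : SimpleGraph V) : Prop :=
  G.IsTree ∧ ∀ H : SimpleGraph V, H.IsTree → graphLength G ≤ graphLength H

attribute [local instance] Classical.propDecidable

noncomputable section Aux

/-- edge length function -/
noncomputable def elen {V : Type*} [MetricSpace V] : Sym2 V → ℝ :=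
  Sym2.lift ⟨fun x y => dist x y, fun _ _ => dist_comm _ _⟩

@[simp] lemma elen_mk {V : Type*} [MetricSpace V] (x y : V) : elen s(x, y) = dist x y := rfl

/-- the edge finset of a graph on a finite vertex type -/
noncomputable def EF {V : Type*} [Finite V] (G : SimpleGraph V) : Finset (Sym2 V) :=
  G.edgeSet.toFinite.toFinset

@[simp] lemma mem_EF {V : Type*} [Finite V] {G : SimpleGraph V} {e : Sym2 V} :
    e ∈ EF G ↔ e ∈ G.edgeSet := Set.Finite.mem_toFinset _

variable {V : Type*}

section GraphLemmas

/-- Case analysis for reachability after deleting one edge. -/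
lemma reachable_cases {G : SimpleGraph V} (u v : V) {a b : V} (p : G.Walk a b) :
    (G.deleteEdges {s(u,v)}).Reachable a b ∨
    ((G.deleteEdges {s(u,v)}).Reachable a u ∧ (G.deleteEdges {s(u,v)}).Reachable v b) ∨
    ((G.deleteEdges {s(u,v)}).Reachable a v ∧ (G.deleteEdges {s(u,v)}).Reachable u b) := by
  set G' := G.deleteEdges {s(u,v)} with hG'
  induction p with
  | nil => exact Or.inl (Reachable.refl _)
  | @cons a c b hac p ih =>
    by_cases he : s(a, c) = s(u, v)
    · rw [Sym2.eq_iff] at he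
      rcases he with ⟨rfl, rfl⟩ | ⟨rfl, rfl⟩
      · -- a = u, c = v
        rcases ih with h | ⟨h1, h2⟩ | ⟨h1, h2⟩
        · exact Or.inr (Or.inl ⟨Reachable.refl _, h⟩)
        · exact Or.inr (Or.inl ⟨Reachable.refl _, h2⟩)
        · exact Or.inl h2
      · -- a = v, c = u
        rcases ih with h | ⟨h1, h2⟩ | ⟨h1, h2⟩
        · exact Or.inr (Or.inr ⟨Reachable.refl _, h⟩)
        · exact Or.inl h2
        · exact Or.inr (Or.inr ⟨Reachable.refl _, h2⟩)
    · have hadj : G'.Adj a c := by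
        rw [hG', SimpleGraph.deleteEdges_adj]
        exact ⟨hac, by simpa using he⟩
      have hr : G'.Reachable a c := hadj.reachable
      rcases ih with h | ⟨h1, h2⟩ | ⟨h1, h2⟩
      · exact Or.inl (hr.trans h)
      · exact Or.inr (Or.inl ⟨hr.trans h1, h2⟩)
      · exact Or.inr (Or.inr ⟨hr.trans h1, h2⟩)

lemma reachable_delete_of_endpoints {G : SimpleGraph V} {u v a b : V}
    (hr : (G.deleteEdges {s(u,v)}).Reachable u v) (p : G.Walk a b) :
    (G.deleteEdges {s(u,v)}).Reachable a b := by
  rcases reachable_cases u v p with h | ⟨h1, h2⟩ | ⟨h1, h2⟩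
  · exact h
  · exact (h1.trans hr).trans h2
  · exact (h1.trans hr.symm).trans h2

lemma connected_delete_of_reachable {G : SimpleGraph V} {u v : V}
    (hc : G.Connected) (hr : (G.deleteEdges {s(u,v)}).Reachable u v) :
    (G.deleteEdges {s(u,v)}).Connected := by
  have : Nonempty V := hc.nonempty
  exact SimpleGraph.Connected.mk fun a b => reachable_delete_of_endpoints hr ((hc a b).some)

lemma not_isBridge_reachable {G : SimpleGraph V} {u v : V} (hadj : G.Adj u v)
    (hb : ¬ G.IsBridge s(u,v)) : (G.deleteEdges {s(u,v)}).Reachable u v := by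
  rw [SimpleGraph.isBridge_iff] at hb
  push_neg at hb
  exact hb

lemma EF_delete_one [Finite V] (G : SimpleGraph V) (e : Sym2 V) :
    EF (G.deleteEdges {e}) = (EF G).erase e := by
  ext f
  simp only [mem_EF, SimpleGraph.edgeSet_deleteEdges, Set.mem_diff, Set.mem_singleton_iff,
    Finset.mem_erase, mem_EF, ne_eq]
  tauto

/-- A connected graph on `n` vertices has at least `n - 1` edges. -/
lemma card_vert_le_of_connected [Fintype V] {G : SimpleGraph V} (hc : G.Connected) :
    Fintype.card V ≤ (EF G).card + 1 := by
  generalize hn : (EF G).card = n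
  induction n using Nat.strong_induction_on generalizing G with
  | _ n ih =>
  by_cases hb : ∀ e ∈ G.edgeSet, G.IsBridge e
  · have hac : G.IsAcyclic := SimpleGraph.isAcyclic_iff_forall_edge_isBridge.mpr hb
    have ht : G.IsTree := ⟨hc, hac⟩
    have := ht.card_edgeFinset
    have hEF : EF G = G.edgeFinset := by ext e; simp [SimpleGraph.mem_edgeFinset]
    rw [hEF] at hn
    omega
  · push_neg at hb
    obtain ⟨e, he, hnb⟩ := hb
    induction e using Sym2.ind with
    | _ u v =>
    have hadj : G.Adj u v := he
    have hr := not_isBridge_reachable hadj hnb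
    have hc' := connected_delete_of_reachable hc hr
    have hcard : (EF (G.deleteEdges {s(u,v)})).card = n - 1 := by
      rw [EF_delete_one, Finset.card_erase_of_mem (by simpa using he), hn]
    have hn1 : 1 ≤ n := by
      rw [← hn]
      refine Finset.card_pos.mpr ⟨s(u,v), ?_⟩
      simpa using he
    have := ih (n-1) (by omega) hc' hcard
    omega


lemma isAcyclic_anti {G H : SimpleGraph V} (hle : H ≤ G) (ha : G.IsAcyclic) : H.IsAcyclic := by
  intro v c hc
  exact ha (c.transfer G (fun e he => SimpleGraph.edgeSet_mono hle (c.edges_subset_edgeSet he)))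
    (hc.transfer _)

/-- A connected graph with at most `n - 1` edges is a tree. -/
lemma isTree_of_connected_of_card [Fintype V] {G : SimpleGraph V} (hc : G.Connected)
    (hcard : (EF G).card + 1 ≤ Fintype.card V) : G.IsTree := by
  refine ⟨hc, ?_⟩
  by_contra hac
  rw [SimpleGraph.IsAcyclic] at hac
  push_neg at hac
  obtain ⟨v, c, hcyc⟩ := hac
  have hlen := hcyc.three_le_length
  have hne : c.edges ≠ [] := by
    intro h
    have := c.length_edges
    rw [h] at this
    simp at this
    omega
  obtain ⟨e, he⟩ := List.exists_mem_of_ne_nil _ hne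
  have heG : e ∈ G.edgeSet := c.edges_subset_edgeSet he
  induction e using Sym2.ind with
  | _ u v' =>
  have hadj : G.Adj u v' := heG
  have hnb : ¬ G.IsBridge s(u, v') := by
    rw [SimpleGraph.isBridge_iff_adj_and_forall_cycle_notMem]
    push_neg
    exact ⟨v, c, hcyc, he⟩
    exact heG
  have hr := not_isBridge_reachable hadj hnb
  have hc' := connected_delete_of_reachable hc hr
  have := card_vert_le_of_connected hc'
  rw [EF_delete_one, Finset.card_erase_of_mem (by simpa using heG)] at this
  have hpos : 1 ≤ (EF G).card := Finset.card_pos.mpr ⟨s(u,v'), by simpa using heG⟩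
  omega

set_option maxHeartbeats 1000000 in
/-- for an acyclic graph, `#V = #edges + #components`. -/
lemma card_eq_card_add_card_cc [Fintype V] {G : SimpleGraph V} (ha : G.IsAcyclic) :
    Fintype.card V = (EF G).card + Nat.card G.ConnectedComponent := by
  generalize hn : (EF G).card = n
  induction n using Nat.strong_induction_on generalizing G with
  | _ n ih =>
  rcases Nat.eq_zero_or_pos n with rfl | hpos
  · have hEmpty : G = ⊥ := by
      rw [← SimpleGraph.edgeSet_eq_empty]
      have := Finset.card_eq_zero.mp hn
      ext e
      simp only [Set.mem_empty_iff_false, iff_false]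
      intro he
      have : e ∈ EF G := by simpa using he
      simp_all
    subst hEmpty
    have hbij : Function.Bijective ((⊥ : SimpleGraph V).connectedComponentMk) := by
      constructor
      · intro a b hab
        exact SimpleGraph.reachable_bot.mp (SimpleGraph.ConnectedComponent.eq.mp hab)
      · exact fun c => c.exists_rep
    rw [Nat.zero_add, ← Nat.card_eq_fintype_card]
    exact Nat.card_eq_of_bijective _ hbij
  · have : ∃ e, e ∈ EF G := Finset.card_pos.mp (by omega)
    obtain ⟨e, he⟩ := this
    have heG : e ∈ G.edgeSet := by simpa using he
    induction e using Sym2.ind with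
    | _ u v =>
    have hadj : G.Adj u v := heG
    set G' := G.deleteEdges {s(u,v)} with hG'def
    have hle : G' ≤ G := SimpleGraph.deleteEdges_le _
    have ha' : G'.IsAcyclic := isAcyclic_anti hle ha
    have hbridge : G.IsBridge s(u,v) :=
      (SimpleGraph.isAcyclic_iff_forall_edge_isBridge.mp ha) heG
    have hnr : ¬ G'.Reachable u v := by
      rw [SimpleGraph.isBridge_iff] at hbridge
      rw [hG'def, SimpleGraph.deleteEdges]
      exact hbridge
    have hcard' : (EF G').card = n - 1 := by
      rw [hG'def, EF_delete_one, Finset.card_erase_of_mem (by simpa using heG), hn]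
    have ihh := ih (n-1) (by omega) ha' hcard'
    -- now: card CC G' = card CC G + 1
    let φ : G'.ConnectedComponent → G.ConnectedComponent :=
      SimpleGraph.ConnectedComponent.map (SimpleGraph.Hom.ofLE hle)
    have hφmk : ∀ w : V, φ (G'.connectedComponentMk w) = G.connectedComponentMk w := by
      intro w
      simp only [φ, SimpleGraph.ConnectedComponent.map_mk]
      rfl
    have key : Nat.card G'.ConnectedComponent = Nat.card G.ConnectedComponent + 1 := by
      classical
      rw [Nat.card_eq_fintype_card, Nat.card_eq_fintype_card]
      have hmap : ∀ d ∈ (Finset.univ : Finset G'.ConnectedComponent),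
          φ d ∈ (Finset.univ : Finset G.ConnectedComponent) :=
        fun _ _ => Finset.mem_univ _
      have htot := Finset.card_eq_sum_card_fiberwise hmap
      rw [← Finset.card_univ, htot, ← Finset.card_univ]
      have hfib : ∀ c : G.ConnectedComponent,
          (Finset.univ.filter (fun d => φ d = c)).card
            = if c = G.connectedComponentMk u then 2 else 1 := by
        intro c
        induction c using SimpleGraph.ConnectedComponent.ind with
        | _ w =>
        by_cases hcu : G.connectedComponentMk w = G.connectedComponentMk u
        · rw [if_pos hcu, hcu]
          have : Finset.univ.filter (fun d => φ d = G.connectedComponentMk u)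
              = {G'.connectedComponentMk u, G'.connectedComponentMk v} := by
            ext d
            induction d using SimpleGraph.ConnectedComponent.ind with
            | _ w' =>
            simp only [Finset.mem_filter, Finset.mem_univ, true_and, Finset.mem_insert,
              Finset.mem_singleton, hφmk]
            constructor
            · intro hd
              have hreach : G.Reachable w' u := SimpleGraph.ConnectedComponent.eq.mp hd
              rcases reachable_cases u v hreach.some with h | ⟨h1, h2⟩ | ⟨h1, h2⟩
              · exact Or.inl (SimpleGraph.ConnectedComponent.eq.mpr h)
              · exact Or.inl (SimpleGraph.ConnectedComponent.eq.mpr h1)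
              · exact Or.inr (SimpleGraph.ConnectedComponent.eq.mpr h1)
            · intro hd
              rcases hd with hd | hd
              · rw [SimpleGraph.ConnectedComponent.eq] at hd
                exact SimpleGraph.ConnectedComponent.eq.mpr ((hd.mono hle))
              · rw [SimpleGraph.ConnectedComponent.eq] at hd
                exact SimpleGraph.ConnectedComponent.eq.mpr ((hd.mono hle).trans hadj.symm.reachable)
          rw [this, Finset.card_insert_of_notMem (Finset.notMem_singleton.mpr
            (fun hbad => hnr (SimpleGraph.ConnectedComponent.eq.mp hbad))),
            Finset.card_singleton]
        · rw [if_neg hcu]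
          rw [Finset.card_eq_one]
          refine ⟨G'.connectedComponentMk w, ?_⟩
          ext d
          induction d using SimpleGraph.ConnectedComponent.ind with
          | _ w' =>
          simp only [Finset.mem_filter, Finset.mem_univ, true_and, Finset.mem_singleton, hφmk]
          constructor
          · intro hd
            have hreach : G.Reachable w' w := SimpleGraph.ConnectedComponent.eq.mp hd
            rcases reachable_cases u v hreach.some with h | ⟨h1, h2⟩ | ⟨h1, h2⟩
            · exact SimpleGraph.ConnectedComponent.eq.mpr h
            · exact absurd (SimpleGraph.ConnectedComponent.eq.mpr
                ((h2.mono hle).symm.trans hadj.symm.reachable)) hcu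
            · exact absurd (SimpleGraph.ConnectedComponent.eq.mpr
                (h2.mono hle).symm) hcu
          · intro hd
            rw [SimpleGraph.ConnectedComponent.eq] at hd
            exact SimpleGraph.ConnectedComponent.eq.mpr (hd.mono hle)
      rw [Finset.sum_congr rfl (fun c _ => hfib c)]
      have hsplit : ∀ c : G.ConnectedComponent,
          (if c = G.connectedComponentMk u then 2 else 1)
            = 1 + (if c = G.connectedComponentMk u then 1 else 0) := by
        intro c; split <;> rfl
      rw [Finset.sum_congr rfl (fun c _ => hsplit c), Finset.sum_add_distrib,
        Finset.sum_const, Finset.sum_ite_eq' Finset.univ (G.connectedComponentMk u) (fun _ => 1)]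
      simp [Finset.card_univ, Nat.add_comm]
    omega

/-- walks project to reachability in the quotient graph -/
lemma quot_reachable {p : ℕ} {G : SimpleGraph V} (f : V → Fin p) {a b : V} (w : G.Walk a b) :
    (SimpleGraph.fromEdgeSet ((Sym2.map f) '' G.edgeSet)).Reachable (f a) (f b) := by
  induction w with
  | nil => exact Reachable.refl _
  | @cons a c b hac w ih =>
    by_cases hfac : f a = f c
    · rwa [hfac]
    · refine (SimpleGraph.Adj.reachable ?_).trans ih
      rw [SimpleGraph.fromEdgeSet_adj]
      exact ⟨⟨s(a, c), hac, rfl⟩, hfac⟩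

/-- A connected graph has at least `p - 1` edges crossing a surjection onto `Fin p`. -/
lemma crossing_card {p : ℕ} [Fintype V] {G : SimpleGraph V} (hc : G.Connected)
    {f : V → Fin p} (hf : Surjective f) :
    p ≤ ((EF G).filter (fun e => ¬ (Sym2.map f e).IsDiag)).card + 1 := by
  have hVne : Nonempty V := hc.nonempty
  have hpne : Nonempty (Fin p) := Nonempty.map f hVne
  set Q : SimpleGraph (Fin p) := SimpleGraph.fromEdgeSet ((Sym2.map f) '' G.edgeSet) with hQ
  have hQc : Q.Connected := by
    refine SimpleGraph.Connected.mk fun i j => ?_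
    obtain ⟨a, rfl⟩ := hf i
    obtain ⟨b, rfl⟩ := hf j
    exact quot_reachable f ((hc a b).some)
  have h1 : p ≤ (EF Q).card + 1 := by
    simpa using card_vert_le_of_connected hQc
  refine le_trans h1 ?_
  have h2 : (EF Q).card ≤ ((EF G).filter (fun e => ¬ (Sym2.map f e).IsDiag)).card := by
    refine Finset.card_le_card_of_surjOn (Sym2.map f) ?_
    intro ε hε
    simp only [Finset.coe_filter, mem_EF, Set.mem_setOf_eq] at hε ⊢
    have hQe : ε ∈ Q.edgeSet := by simpa using hε
    rw [hQ, SimpleGraph.edgeSet_fromEdgeSet] at hQe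
    obtain ⟨⟨e, heG, rfl⟩, hnd⟩ := hQe
    exact ⟨e, ⟨heG, by simpa using hnd⟩, rfl⟩
  omega

lemma EF_eq_edgeFinset [Fintype V] (G : SimpleGraph V) [Fintype G.edgeSet] :
    EF G = G.edgeFinset := by
  ext e; simp [SimpleGraph.mem_edgeFinset]

lemma card_EF_tree [Fintype V] {G : SimpleGraph V} (hT : G.IsTree) :
    (EF G).card + 1 = Fintype.card V := by
  classical
  rw [EF_eq_edgeFinset]
  exact hT.card_edgeFinset

end GraphLemmas

section MetricGraph
variable {V : Type} [MetricSpace V] [Fintype V]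

lemma graphLength_eq (G : SimpleGraph V) : graphLength G = (EF G).sum elen := rfl

/-- The exchange/cycle property of minimal spanning trees. -/
lemma exchange {G : SimpleGraph V} (hMST : IsMST G) {x y : V} (hxy : x ≠ y)
    {pth : G.Walk x y} (hp : pth.IsPath) {e : Sym2 V} (he : e ∈ pth.edges) :
    elen e ≤ dist x y := by
  classical
  obtain ⟨hT, hmin⟩ := hMST
  have heG : e ∈ G.edgeSet := pth.edges_subset_edgeSet he
  by_cases hadj : s(x, y) ∈ G.edgeSet
  · -- then pth is the single edge
    have hsingle : pth = SimpleGraph.Walk.cons hadj SimpleGraph.Walk.nil := by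
      have h1 : (⟨pth, hp⟩ : G.Path x y) = SimpleGraph.Path.singleton hadj :=
        hT.IsAcyclic.path_unique _ _
      simpa [SimpleGraph.Path.singleton] using congrArg Subtype.val h1
    rw [hsingle] at he
    simp only [SimpleGraph.Walk.edges_cons, SimpleGraph.Walk.edges_nil, List.mem_singleton] at he
    obtain rfl : e = s(x, y) := List.mem_singleton.mp he
    simp
  · induction e using Sym2.ind with
    | _ u v =>
    set T' : SimpleGraph V := SimpleGraph.fromEdgeSet ((G.edgeSet \ {s(u,v)}) ∪ {s(x,y)})
      with hT'def
    have hE : T'.edgeSet = (G.edgeSet \ {s(u,v)}) ∪ {s(x,y)} := by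
      rw [hT'def, SimpleGraph.edgeSet_fromEdgeSet]
      ext ε
      simp only [Set.mem_diff, Set.mem_setOf_eq, and_iff_left_iff_imp]
      rintro (⟨hmem, -⟩ | rfl)
      · exact SimpleGraph.not_isDiag_of_mem_edgeSet G hmem
      · rw [Sym2.mem_diagSet, Sym2.mk_isDiag_iff]
        exact hxy
    have hdel_le : G.deleteEdges {s(u,v)} ≤ T' := by
      intro a b hab
      rw [← SimpleGraph.mem_edgeSet] at hab ⊢
      rw [SimpleGraph.edgeSet_deleteEdges] at hab
      rw [hE]
      exact Or.inl hab
    have hxyT' : T'.Adj x y := by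
      rw [← SimpleGraph.mem_edgeSet, hE]
      exact Or.inr rfl
    have hnreach : ¬ (G.deleteEdges {s(u,v)}).Reachable x y := by
      intro hr
      have hw := hr.some
      have hsub : ∀ ε ∈ hw.edges, ε ∈ G.edgeSet := by
        intro ε hε
        have hh := hw.edges_subset_edgeSet hε
        rw [SimpleGraph.edgeSet_deleteEdges] at hh
        exact hh.1
      have hnot : s(u,v) ∉ hw.edges := by
        intro hbad
        have hh := hw.edges_subset_edgeSet hbad
        rw [SimpleGraph.edgeSet_deleteEdges] at hh
        simp at hh
      have huniq : (hw.transfer G hsub).toPath = (⟨pth, hp⟩ : G.Path x y) :=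
        hT.IsAcyclic.path_unique _ _
      have hmem2 : s(u,v) ∈ (hw.transfer G hsub).edges := by
        apply (hw.transfer G hsub).edges_toPath_subset
        rw [huniq]
        exact he
      rw [SimpleGraph.Walk.edges_transfer] at hmem2
      exact hnot hmem2
    have huv : T'.Reachable u v := by
      rcases reachable_cases u v pth with h | ⟨h1, h2⟩ | ⟨h1, h2⟩
      · exact absurd h hnreach
      · exact (h1.mono hdel_le).symm.trans
          (hxyT'.reachable.trans (h2.mono hdel_le).symm)
      · exact (h2.mono hdel_le).trans
          (hxyT'.symm.reachable.trans (h1.mono hdel_le))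
    have hconn : T'.Connected := by
      have : Nonempty V := ⟨x⟩
      refine SimpleGraph.Connected.mk fun a b => ?_
      rcases reachable_cases u v ((hT.isConnected a b).some) with h | ⟨h1, h2⟩ | ⟨h1, h2⟩
      · exact h.mono hdel_le
      · exact ((h1.mono hdel_le).trans huv).trans (h2.mono hdel_le)
      · exact ((h1.mono hdel_le).trans huv.symm).trans (h2.mono hdel_le)
    have hEF' : EF T' = insert s(x,y) ((EF G).erase s(u,v)) := by
      ext ε
      simp only [mem_EF, hE, Set.mem_union, Set.mem_diff, Set.mem_singleton_iff,
        Finset.mem_insert, Finset.mem_erase, ne_eq]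
      tauto
    have hmemEF : s(u,v) ∈ EF G := by simpa using heG
    have hnotmem : s(x,y) ∉ (EF G).erase s(u,v) := by
      intro hbad
      exact hadj (by simpa using (Finset.mem_of_mem_erase hbad))
    have hcard' : (EF T').card = (EF G).card := by
      rw [hEF', Finset.card_insert_of_notMem hnotmem, Finset.card_erase_of_mem hmemEF]
      have : 1 ≤ (EF G).card := Finset.card_pos.mpr ⟨_, hmemEF⟩
      omega
    have htree' : T'.IsTree := by
      apply isTree_of_connected_of_card hconn
      rw [hcard', card_EF_tree hT]
    have hlen : graphLength T' = graphLength G - elen s(u,v) + dist x y := by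
      rw [graphLength_eq, graphLength_eq, hEF', Finset.sum_insert hnotmem,
        Finset.sum_erase_eq_sub hmemEF, elen_mk]
      ring
    have := hmin T' htree'
    rw [hlen] at this
    linarith

end MetricGraph

section Tau
variable (V : Type) [MetricSpace V] [Fintype V]

/-- minimal distance between points separated by `f` -/
noncomputable def minCross {κ : Type} (f : V → κ) : ℝ :=
  sInf {r | ∃ x y : V, f x ≠ f y ∧ dist x y = r}

/-- the set of `minCross` values over surjections onto `Fin (k+1)` -/
def tauSet (k : ℕ) : Set ℝ :=
  {r | ∃ f : V → Fin (k+1), Surjective f ∧ minCross V f = r}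

/-- the `k`-th isolation index: max over partitions into `k+1` parts of the min cross distance -/
noncomputable def tau (k : ℕ) : ℝ := sSup (tauSet V k)

variable {V}

lemma crossSet_finite {κ : Type} (f : V → κ) :
    {r | ∃ x y : V, f x ≠ f y ∧ dist x y = r}.Finite := by
  apply Set.Finite.subset (Set.finite_range (fun p : V × V => dist p.1 p.2))
  rintro r ⟨x, y, -, rfl⟩
  exact ⟨(x, y), rfl⟩

lemma crossSet_nonempty {κ : Type} {f : V → κ} {x y : V} (hxy : f x ≠ f y) :
    {r | ∃ x y : V, f x ≠ f y ∧ dist x y = r}.Nonempty :=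
  ⟨dist x y, x, y, hxy, rfl⟩

lemma minCross_mem {κ : Type} {f : V → κ} {x y : V} (hxy : f x ≠ f y) :
    ∃ a b : V, f a ≠ f b ∧ dist a b = minCross V f :=
  (Set.Nonempty.csInf_mem (crossSet_nonempty hxy) (crossSet_finite f) : _)

lemma minCross_le {κ : Type} (f : V → κ) {x y : V} (hxy : f x ≠ f y) :
    minCross V f ≤ dist x y :=
  csInf_le (Set.Finite.bddBelow (crossSet_finite f)) ⟨x, y, hxy, rfl⟩

lemma exists_cross {k : ℕ} (hk : 1 ≤ k) {f : V → Fin (k+1)} (hf : Surjective f) :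
    ∃ x y : V, f x ≠ f y := by
  obtain ⟨x, hx⟩ := hf ⟨0, by omega⟩
  obtain ⟨y, hy⟩ := hf ⟨1, by omega⟩
  exact ⟨x, y, by rw [hx, hy]; simp [Fin.ext_iff]⟩

lemma minCross_pos {k : ℕ} (hk : 1 ≤ k) {f : V → Fin (k+1)} (hf : Surjective f) :
    0 < minCross V f := by
  obtain ⟨x, y, hxy⟩ := exists_cross hk hf
  obtain ⟨a, b, hab, hd⟩ := minCross_mem hxy
  rw [← hd]
  exact dist_pos.mpr (fun h => hab (by rw [h]))

lemma minCross_le_diam {k : ℕ} (hk : 1 ≤ k) {f : V → Fin (k+1)} (hf : Surjective f) :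
    minCross V f ≤ Metric.diam (Set.univ : Set V) := by
  obtain ⟨x, y, hxy⟩ := exists_cross hk hf
  obtain ⟨a, b, hab, hd⟩ := minCross_mem hxy
  rw [← hd]
  exact Metric.dist_le_diam_of_mem
    ((isCompact_univ (X := V)).isBounded) (Set.mem_univ a) (Set.mem_univ b)

lemma tauSet_finite (k : ℕ) : (tauSet V k).Finite := by
  apply Set.Finite.subset (Set.finite_range (fun f : V → Fin (k+1) => minCross V f))
  rintro r ⟨f, -, rfl⟩
  exact ⟨f, rfl⟩

lemma exists_surj_fin {k : ℕ} [Nonempty V] (hk : k + 1 ≤ Fintype.card V) :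
    ∃ f : V → Fin (k+1), Surjective f := by
  have : Nonempty (Fin (k+1) ↪ V) := by
    rw [Function.Embedding.nonempty_iff_card_le]
    simpa using hk
  obtain ⟨g⟩ := this
  exact ⟨Function.invFun g, Function.invFun_surjective g.injective⟩

lemma tauSet_nonempty {k : ℕ} [Nonempty V] (hk : k + 1 ≤ Fintype.card V) :
    (tauSet V k).Nonempty := by
  obtain ⟨f, hf⟩ := exists_surj_fin hk
  exact ⟨minCross V f, f, hf, rfl⟩

lemma tau_mem {k : ℕ} [Nonempty V] (hk : k + 1 ≤ Fintype.card V) :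
    ∃ f : V → Fin (k+1), Surjective f ∧ minCross V f = tau V k :=
  (Set.Nonempty.csSup_mem (tauSet_nonempty hk) (tauSet_finite k) : _)

lemma le_tau {k : ℕ} [Nonempty V] (hk : k + 1 ≤ Fintype.card V)
    {f : V → Fin (k+1)} (hf : Surjective f) : minCross V f ≤ tau V k :=
  le_csSup (Set.Finite.bddAbove (tauSet_finite k)) ⟨f, hf, rfl⟩

lemma tau_pos {k : ℕ} [Nonempty V] (hk1 : 1 ≤ k) (hk : k + 1 ≤ Fintype.card V) :
    0 < tau V k := by
  obtain ⟨f, hf, hmc⟩ := tau_mem hk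
  rw [← hmc]
  exact minCross_pos hk1 hf

lemma tau_le_diam {k : ℕ} [Nonempty V] (hk1 : 1 ≤ k) (hk : k + 1 ≤ Fintype.card V) :
    tau V k ≤ Metric.diam (Set.univ : Set V) := by
  obtain ⟨f, hf, hmc⟩ := tau_mem hk
  rw [← hmc]
  exact minCross_le_diam hk1 hf

end Tau

section Spectrum
variable {V : Type} [MetricSpace V] [Fintype V]

local notation "r'" => (fun e e' : Sym2 V => elen e' ≤ elen e)

/-- A sorted-descending real list: number of entries exceeding the `i`-th is at most `i`. -/
lemma sorted_countP_le {L : List ℝ} (hs : L.Pairwise (· ≥ ·)) {i : ℕ} (hi : i < L.length)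
    {a : ℝ} (ha : L.get ⟨i, hi⟩ ≤ a) :
    L.countP (fun x => decide (a < x)) ≤ i := by
  have hsplit : L.countP (fun x => decide (a < x))
      = (L.take i).countP (fun x => decide (a < x))
        + (L.drop i).countP (fun x => decide (a < x)) := by
    conv_lhs => rw [← List.take_append_drop i L]
    rw [List.countP_append]
  rw [hsplit]
  have h1 : (L.take i).countP (fun x => decide (a < x)) ≤ i := by
    calc _ ≤ (L.take i).length := List.countP_le_length
    _ ≤ i := by simp [List.length_take]
  have h2 : (L.drop i).countP (fun x => decide (a < x)) = 0 := by
    rw [List.countP_eq_zero]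
    intro x hx
    obtain ⟨j, hj⟩ := List.get_of_mem hx
    have hjl : i + j.1 < L.length := by
      have h := j.2
      have hld : (List.drop i L).length = L.length - i := List.length_drop
      omega
    have hxval : x = L.get ⟨i + j.1, hjl⟩ := by
      rw [← hj]; simp [List.get_eq_getElem]
    have hle : L.get ⟨i + j.1, hjl⟩ ≤ L.get ⟨i, hi⟩ := by
      rcases Nat.eq_zero_or_pos j.1 with hz | hpos
      · have : (⟨i + j.1, hjl⟩ : Fin L.length) = ⟨i, hi⟩ := by
          apply Fin.ext; simp [hz]
        rw [this]
      · exact (List.pairwise_iff_get.mp hs) ⟨i, hi⟩ ⟨i + j.1, hjl⟩ (by simp; omega)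
    simp only [decide_eq_true_eq, not_lt]
    rw [hxval]
    linarith
  omega

/-- elements of the first `k` entries of a descending list are at least the `k-1`-st entry. -/
lemma sorted_take_ge {L : List ℝ} (hs : L.Pairwise (· ≥ ·)) {k : ℕ}
    (hik : k - 1 < L.length) : ∀ x ∈ L.take k, L.get ⟨k - 1, hik⟩ ≤ x := by
  intro x hx
  obtain ⟨j, hj⟩ := List.get_of_mem hx
  have hlt : (List.take k L).length = min k L.length := List.length_take
  have hjk : j.1 < k := by
    have h := j.2; omega
  have hjL : j.1 < L.length := by
    have h := j.2; omega
  have hxe : x = L.get ⟨j.1, hjL⟩ := by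
    rw [← hj]; simp [List.get_eq_getElem]
  rw [hxe]
  rcases Nat.lt_or_ge j.1 (k-1) with hlt | hge
  · exact (List.pairwise_iff_get.mp hs) ⟨j.1, hjL⟩ ⟨k-1, hik⟩ (by simpa using hlt)
  · have heq : (⟨j.1, hjL⟩ : Fin L.length) = ⟨k-1, hik⟩ := by
      apply Fin.ext; simp; omega
    rw [heq]

lemma edgeLengths_eq (G : SimpleGraph V) : edgeLengths G = (EF G).val.map elen := rfl

/-- Any minimal spanning tree has sorted edge-length vector `(tau V k)_k`. -/
theorem mst_sorted_eq_tau [Nonempty V] {T : SimpleGraph V} (hMST : IsMST T)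
    {k : ℕ} (hk1 : 1 ≤ k) (hk : k + 1 ≤ Fintype.card V) :
    ((edgeLengths T).sort (· ≥ ·)).getD (k-1) 0 = tau V k := by
  classical
  obtain ⟨hT, hmin⟩ := hMST
  set m := Fintype.card V with hm
  set L := (edgeLengths T).sort (· ≥ ·) with hL
  have hLmul : (L : Multiset ℝ) = edgeLengths T := Multiset.sort_eq _ _
  have hSorted : L.Pairwise (· ≥ ·) := Multiset.pairwise_sort _ _
  have hLlen : L.length = m - 1 := by
    have h1 : L.length = Multiset.card (edgeLengths T) := by
      rw [← hLmul]; simp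
    have h2 : Multiset.card (edgeLengths T) = (EF T).card := by
      rw [edgeLengths_eq, Multiset.card_map, ← Finset.card_def]
    have := card_EF_tree hT
    omega
  have hik : k - 1 < L.length := by omega
  have hgetD : L.getD (k-1) 0 = L.get ⟨k-1, hik⟩ := List.getD_eq_get L 0 ⟨k-1, hik⟩
  set s := L.get ⟨k-1, hik⟩ with hs
  rw [hgetD]
  -- the sorted list of edges
  haveI instTot : Std.Total r' := ⟨fun a b => le_total (elen b) (elen a)⟩
  haveI instTrans : IsTrans (Sym2 V) r' := ⟨fun a b c h1 h2 => le_trans h2 h1⟩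
  set es := List.insertionSort r' (EF T).toList with hes
  have hesperm : es.Perm (EF T).toList := List.perm_insertionSort _ _
  have hesnodup : es.Nodup := hesperm.nodup_iff.mpr (Finset.nodup_toList _)
  have hessorted : List.Pairwise r' es := List.pairwise_insertionSort _ _
  have hmapsorted : (es.map elen).Pairwise (· ≥ ·) := List.pairwise_map.mpr hessorted
  have hmapeq : es.map elen = L := by
    refine List.Perm.eq_of_pairwise' hmapsorted hSorted ?_
    rw [← Multiset.coe_eq_coe, hLmul, edgeLengths_eq]
    have : ((EF T).toList.map elen : Multiset ℝ) = (EF T).val.map elen := by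
      rw [← Multiset.map_coe, Finset.coe_toList]
    rw [← this]
    exact Multiset.coe_eq_coe.mpr (hesperm.map elen)
  have heslen : es.length = m - 1 := by
    have := congrArg List.length hmapeq
    simpa [hLlen] using this
  have hmem_es : ∀ e, e ∈ es ↔ e ∈ EF T := by
    intro e
    rw [hesperm.mem_iff, Finset.mem_toList]
  -- elements of `take k` have length ≥ s, and s is attained at index k-1
  have htake_ge : ∀ e ∈ es.take k, s ≤ elen e := by
    intro e he
    have hmem : elen e ∈ (es.map elen).take k := by
      rw [← List.map_take]
      exact List.mem_map_of_mem he
    rw [hmapeq] at hmem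
    exact sorted_take_ge hSorted hik (elen e) hmem
  -- PART 1 : tau ≤ s
  have part1 : tau V k ≤ s := by
    obtain ⟨f, hf, hmc⟩ := tau_mem hk
    have hcross_card := crossing_card hT.isConnected hf
    set cross := (EF T).filter (fun e => ¬ (Sym2.map f e).IsDiag) with hcross
    have hkcross : k ≤ cross.card := by omega
    -- edges longer than s number at most k-1
    have hbig : ((EF T).filter (fun e => s < elen e)).card ≤ k - 1 := by
      have hc1 : Multiset.countP (fun x => s < x) (L : Multiset ℝ)
          = L.countP (fun x => decide (s < x)) := Multiset.coe_countP _ _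
      rw [hLmul, edgeLengths_eq, Multiset.countP_map] at hc1
      have hc2 : ((EF T).filter (fun e => s < elen e)).card
          = Multiset.card (Multiset.filter (fun e => s < elen e) (EF T).val) := by
        rw [Finset.card_def, Finset.filter_val]
      have hcount := sorted_countP_le hSorted hik (le_refl s)
      rw [← hc1] at hcount
      rw [hc2]
      omega
    -- some crossing edge has length ≤ s
    have hexists : ∃ e ∈ cross, elen e ≤ s := by
      by_contra hno
      push_neg at hno
      have hsub : cross ⊆ (EF T).filter (fun e => s < elen e) := by
        intro e he
        rw [Finset.mem_filter]
        rw [hcross, Finset.mem_filter] at he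
        exact ⟨he.1, hno e (by rw [hcross, Finset.mem_filter]; exact he)⟩
      have := Finset.card_le_card hsub
      omega
    obtain ⟨e, hecross, helen⟩ := hexists
    rw [hcross, Finset.mem_filter] at hecross
    obtain ⟨heT, hediag⟩ := hecross
    rw [← hmc]
    induction e using Sym2.ind with
    | _ a b =>
    have hfab : f a ≠ f b := by
      simpa [Sym2.mk_isDiag_iff] using hediag
    calc minCross V f ≤ dist a b := minCross_le f hfab
    _ ≤ s := by simpa using helen
  -- PART 2 : s ≤ tau
  have part2 : s ≤ tau V k := by
    set Fk := (es.take k).toFinset with hFk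
    have hFkcard : Fk.card = k := by
      rw [hFk, List.toFinset_card_of_nodup (hesnodup.sublist (List.take_sublist _ _))]
      rw [List.length_take]
      omega
    have hFksub : Fk ⊆ EF T := by
      intro e he
      rw [hFk, List.mem_toFinset] at he
      exact (hmem_es e).mp (List.mem_of_mem_take he)
    set G' := T.deleteEdges ↑Fk with hG'
    have hG'le : G' ≤ T := SimpleGraph.deleteEdges_le _
    have hG'ac : G'.IsAcyclic := isAcyclic_anti hG'le hT.IsAcyclic
    have hEFG' : EF G' = EF T \ Fk := by
      ext e
      simp only [mem_EF, hG', SimpleGraph.edgeSet_deleteEdges, Set.mem_diff,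
        Finset.mem_sdiff, mem_EF, Finset.mem_coe]
    have hcardG' : (EF G').card = (m - 1) - k := by
      rw [hEFG', Finset.card_sdiff_of_subset hFksub, hFkcard]
      have := card_EF_tree hT
      omega
    have hncc : Nat.card G'.ConnectedComponent = k + 1 := by
      have := card_eq_card_add_card_cc hG'ac
      rw [hcardG'] at this
      have hm2 : k + 1 ≤ m := hk
      omega
    have : Fintype.card G'.ConnectedComponent = k + 1 := by
      rw [← Nat.card_eq_fintype_card, hncc]
    obtain ψ := Fintype.equivFinOfCardEq this
    set f : V → Fin (k+1) := fun x => ψ (G'.connectedComponentMk x) with hf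
    have hfsurj : Surjective f := by
      intro i
      obtain ⟨c, hc⟩ := ψ.surjective i
      obtain ⟨w, rfl⟩ := c.exists_rep
      exact ⟨w, hc⟩
    have hcross_ge : ∀ x y : V, f x ≠ f y → s ≤ dist x y := by
      intro x y hfxy
      have hreach : ¬ G'.Reachable x y := by
        intro hr
        exact hfxy (by rw [hf]; simp only []; congr 1; exact SimpleGraph.ConnectedComponent.eq.mpr hr)
      have hxy : x ≠ y := by rintro rfl; exact hreach (Reachable.refl _)
      obtain ⟨pth, hp, -⟩ := hT.existsUnique_path x y
      have hexedge : ∃ e ∈ pth.edges, e ∈ Fk := by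
        by_contra hno
        push_neg at hno
        have hsub : ∀ e ∈ pth.edges, e ∈ G'.edgeSet := by
          intro e he
          rw [hG', SimpleGraph.edgeSet_deleteEdges]
          exact ⟨pth.edges_subset_edgeSet he, fun hbad => hno e he (by simpa using hbad)⟩
        exact hreach (pth.transfer G' hsub).reachable
      obtain ⟨e, hepth, heFk⟩ := hexedge
      have hse : s ≤ elen e := htake_ge e (by rwa [hFk, List.mem_toFinset] at heFk)
      calc s ≤ elen e := hse
      _ ≤ dist x y := exchange ⟨hT, hmin⟩ hxy hp hepth
    obtain ⟨x0, y0, hxy0⟩ := exists_cross hk1 hfsurj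
    obtain ⟨a, b, hab, habd⟩ := minCross_mem hxy0
    have : s ≤ minCross V f := by
      rw [← habd]
      exact hcross_ge a b hab
    exact le_trans this (le_tau hk hfsurj)
  linarith

end Spectrum

section GH
open GromovHausdorff

variable {A B : Type} [MetricSpace A] [Fintype A] [Nonempty A]
  [MetricSpace B] [Fintype B] [Nonempty B]

/-- Upper bound on the GH distance from a correspondence with small distortion. -/
lemma ghDist_le_of_rel (R : Set (A × B)) (hA : ∀ a, ∃ b, (a,b) ∈ R) (hB : ∀ b, ∃ a, (a,b) ∈ R)
    {ε : ℝ} (hε : 0 < ε)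
    (hdis : ∀ p ∈ R, ∀ q ∈ R, |dist p.1 q.1 - dist p.2 q.2| ≤ 2 * ε) :
    ghDist A B ≤ ε := by
  obtain ⟨b0, hb0⟩ := hA (Classical.arbitrary A)
  haveI hRne : Nonempty R := ⟨⟨_, hb0⟩⟩
  set Φ : R → A := fun p => p.1.1 with hΦ
  set Ψ : R → B := fun p => p.1.2 with hΨ
  letI : MetricSpace (A ⊕ B) := Metric.glueMetricApprox Φ Ψ ε hε
    (fun p q => hdis _ p.2 _ q.2)
  have hinl : Isometry (Sum.inl : A → A ⊕ B) := Isometry.of_dist_eq (fun x y => rfl)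
  have hinr : Isometry (Sum.inr : B → A ⊕ B) := Isometry.of_dist_eq (fun x y => rfl)
  refine le_trans (ghDist_le_hausdorffDist hinl hinr) ?_
  apply Metric.hausdorffDist_le_of_mem_dist (le_of_lt hε)
  · rintro x ⟨a, rfl⟩
    obtain ⟨b, hb⟩ := hA a
    refine ⟨Sum.inr b, ⟨b, rfl⟩, ?_⟩
    have := Metric.glueDist_glued_points Φ Ψ ε ⟨(a,b), hb⟩
    exact le_of_eq this
  · rintro y ⟨b, rfl⟩
    obtain ⟨a, ha⟩ := hB b
    refine ⟨Sum.inl a, ⟨a, rfl⟩, ?_⟩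
    have h := Metric.glueDist_glued_points Φ Ψ ε ⟨(a,b), ha⟩
    exact le_of_eq ((dist_comm _ _).trans h)

/-- Any value above the GH distance admits a correspondence with that distortion. -/
lemma exists_rel_of_ghDist_lt {δ : ℝ} (hδ : ghDist A B < δ) :
    ∃ R : Set (A × B), (∀ a, ∃ b, (a,b) ∈ R) ∧ (∀ b, ∃ a, (a,b) ∈ R) ∧
      ∀ p ∈ R, ∀ q ∈ R, |dist p.1 q.1 - dist p.2 q.2| ≤ 2 * δ := by
  obtain ⟨Φ, Ψ, hΦ, hΨ, heq⟩ := ghDist_eq_hausdorffDist A B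
  have hfin : EMetric.hausdorffEdist (Set.range Φ) (Set.range Ψ) ≠ ⊤ :=
    Metric.hausdorffEdist_ne_top_of_nonempty_of_bounded (Set.range_nonempty _)
      (Set.range_nonempty _) (isCompact_range hΦ.continuous).isBounded
      (isCompact_range hΨ.continuous).isBounded
  have hhd : Metric.hausdorffDist (Set.range Φ) (Set.range Ψ) < δ := heq ▸ hδ
  refine ⟨{p : A × B | dist (Φ p.1) (Ψ p.2) < δ}, ?_, ?_, ?_⟩
  · intro a
    obtain ⟨y, ⟨b, rfl⟩, hy⟩ :=
      Metric.exists_dist_lt_of_hausdorffDist_lt (Set.mem_range_self a) hhd hfin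
    exact ⟨b, hy⟩
  · intro b
    obtain ⟨y, ⟨a, rfl⟩, hy⟩ :=
      Metric.exists_dist_lt_of_hausdorffDist_lt' (Set.mem_range_self b) hhd hfin
    exact ⟨a, hy⟩
  · rintro ⟨a, b⟩ hab ⟨a', b'⟩ hab'
    simp only [Set.mem_setOf_eq] at hab hab'
    rw [abs_sub_le_iff]
    constructor
    · have h4 : dist (Φ a) (Φ a') ≤ dist (Φ a) (Ψ b) + dist (Ψ b) (Ψ b') + dist (Ψ b') (Φ a') :=
        dist_triangle4 _ _ _ _
      rw [hΦ.dist_eq, hΨ.dist_eq] at h4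
      rw [dist_comm (Ψ b') (Φ a')] at h4
      linarith
    · have h4 : dist (Ψ b) (Ψ b') ≤ dist (Ψ b) (Φ a) + dist (Φ a) (Φ a') + dist (Φ a') (Ψ b') :=
        dist_triangle4 _ _ _ _
      rw [hΦ.dist_eq, hΨ.dist_eq] at h4
      rw [dist_comm (Ψ b) (Φ a)] at h4
      linarith

/-- GH distance to the one-point space is half the diameter. -/
lemma ghDist_punit : 2 * ghDist PUnit.{1} B = Metric.diam (Set.univ : Set B) := by
  have hd0 : (0:ℝ) ≤ Metric.diam (Set.univ : Set B) := Metric.diam_nonneg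
  have hbd := (isCompact_univ (X := B)).isBounded
  apply le_antisymm
  · -- 2 ghDist ≤ diam
    have : ∀ η : ℝ, 0 < η → ghDist PUnit.{1} B ≤ Metric.diam (Set.univ : Set B) / 2 + η := by
      intro η hη
      apply ghDist_le_of_rel (Set.univ : Set (PUnit × B)) (fun a => ⟨Classical.arbitrary B, trivial⟩)
        (fun b => ⟨PUnit.unit, trivial⟩) (by positivity)
      rintro ⟨u, x⟩ - ⟨u', y⟩ -
      have hu : dist u u' = 0 := by
        have hu' : u = u' := Subsingleton.elim u u'
        rw [hu']
        exact dist_self _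
      simp only [hu]
      rw [zero_sub, abs_neg, abs_of_nonneg dist_nonneg]
      have := Metric.dist_le_diam_of_mem hbd (Set.mem_univ x) (Set.mem_univ y)
      linarith
    have h2 : ghDist PUnit.{1} B ≤ Metric.diam (Set.univ : Set B) / 2 := by
      apply _root_.le_of_forall_pos_le_add
      intro η hη
      exact this η hη
    linarith
  · -- diam ≤ 2 ghDist
    have key : ∀ δ : ℝ, ghDist PUnit.{1} B < δ → Metric.diam (Set.univ : Set B) ≤ 2 * δ := by
      intro δ hδ
      obtain ⟨R, hA, hB, hdis⟩ := exists_rel_of_ghDist_lt hδ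
      have h00 : (0:ℝ) ≤ ghDist PUnit.{1} B := dist_nonneg
      have hδ0 : 0 ≤ δ := le_trans h00 (le_of_lt hδ)
      apply Metric.diam_le_of_forall_dist_le (by linarith)
      intro x _ y _
      obtain ⟨u, hu⟩ := hB x
      obtain ⟨u', hu'⟩ := hB y
      have := hdis _ hu _ hu'
      have huu : dist u u' = 0 := by
        have he : u = u' := Subsingleton.elim u u'
        rw [he]
        exact dist_self _
      rw [huu, zero_sub, abs_neg, abs_of_nonneg dist_nonneg] at this
      linarith
    apply _root_.le_of_forall_pos_le_add
    intro η hη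
    have h00 : (0:ℝ) ≤ ghDist PUnit.{1} B := dist_nonneg
    have := key (ghDist PUnit.{1} B + η/2) (by linarith)
    linarith

end GH

section Simplex
open GromovHausdorff

/-- the metric space structure on `Fin n` with all nonzero distances `l` -/
noncomputable def simplexMet (n : ℕ) (l : ℝ) (hl : 0 < l) : MetricSpace (Fin n) where
  dist x y := if x = y then 0 else l
  dist_self x := if_pos rfl
  dist_comm x y := by
    show (if x = y then (0:ℝ) else l) = (if y = x then (0:ℝ) else l)
    by_cases h : x = y
    · simp [h]
    · rw [if_neg h, if_neg (Ne.symm h)]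
  dist_triangle x y z := by
    show (if x = z then (0:ℝ) else l)
      ≤ (if x = y then (0:ℝ) else l) + (if y = z then (0:ℝ) else l)
    by_cases hxz : x = z
    · rw [if_pos hxz]
      have h1 : (0:ℝ) ≤ if x = y then 0 else l := by split <;> [rfl; exact le_of_lt hl]
      have h2 : (0:ℝ) ≤ if y = z then 0 else l := by split <;> [rfl; exact le_of_lt hl]
      linarith
    · rw [if_neg hxz]
      by_cases hxy : x = y
      · subst hxy
        rw [if_pos rfl, if_neg hxz]
        linarith
      · rw [if_neg hxy]
        have h2 : (0:ℝ) ≤ if y = z then 0 else l := by split <;> [rfl; exact le_of_lt hl]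
        linarith
  eq_of_dist_eq_zero := by
    intro x y h
    have h' : (if x = y then (0:ℝ) else l) = 0 := h
    by_cases hxy : x = y
    · exact hxy
    · rw [if_neg hxy] at h'
      exact absurd h' (ne_of_gt hl)

lemma isSimplexOf_simplexMet (n : ℕ) (l : ℝ) (hl : 0 < l) :
    letI := simplexMet n l hl
    IsSimplexOf (Fin n) n l := by
  letI := simplexMet n l hl
  refine ⟨Fintype.card_fin n, fun x y hxy => ?_⟩
  show (if x = y then 0 else l) = l
  rw [if_neg hxy]

variable {Δ B : Type} [MetricSpace Δ] [Fintype Δ] [Nonempty Δ]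
  [MetricSpace B] [Fintype B] [Nonempty B]

/-- if the simplex has more points than `B`, the GH distance is at least `l/2`. -/
lemma le_ghDist_simplex {n : ℕ} {l : ℝ} (hl : 0 < l) (hS : IsSimplexOf Δ n l)
    (hcard : Fintype.card B < n) : l ≤ 2 * ghDist Δ B := by
  have key : ∀ δ : ℝ, ghDist Δ B < δ → l ≤ 2 * δ := by
    intro δ hδ
    obtain ⟨R, hA, hB, hdis⟩ := exists_rel_of_ghDist_lt hδ
    have hg : ∀ t : Δ, ∃ b, (t, b) ∈ R := hA
    choose g hg using hg
    have : Fintype.card B < Fintype.card Δ := by rw [hS.1]; exact hcard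
    obtain ⟨t, t', htt', hgtt⟩ := Fintype.exists_ne_map_eq_of_card_lt g this
    have hd := hdis _ (hg t) _ (hg t')
    simp only at hd
    have hz : dist (g t) (g t') = 0 := by rw [hgtt]; exact dist_self _
    rw [hz, sub_zero, hS.2 t t' htt', abs_of_pos hl] at hd
    exact hd
  have h00 : (0:ℝ) ≤ ghDist Δ B := dist_nonneg
  apply _root_.le_of_forall_pos_le_add
  intro η hη
  have := key (ghDist Δ B + η/2) (by linarith)
  linarith

/-- exact formula for the GH distance between a large simplex and `B`. -/
lemma ghDist_simplex_eq {k : ℕ} {l : ℝ} (hS : IsSimplexOf Δ (k+1) l)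
    (hk1 : 1 ≤ k) (hcard : k + 1 ≤ Fintype.card B)
    (hdiam : 2 * Metric.diam (Set.univ : Set B) ≤ l) :
    2 * ghDist Δ B = l - tau B k := by
  have hbd := (isCompact_univ (X := B)).isBounded
  have hd0 : (0:ℝ) ≤ Metric.diam (Set.univ : Set B) := Metric.diam_nonneg
  have htau_pos : 0 < tau B k := tau_pos hk1 hcard
  have htau_diam : tau B k ≤ Metric.diam (Set.univ : Set B) := tau_le_diam hk1 hcard
  have hl : 0 < l := by linarith
  have hdist_le_diam : ∀ x y : B, dist x y ≤ Metric.diam (Set.univ : Set B) :=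
    fun x y => Metric.dist_le_diam_of_mem hbd (Set.mem_univ x) (Set.mem_univ y)
  obtain ⟨e⟩ : Nonempty (Δ ≃ Fin (k+1)) := ⟨Fintype.equivFinOfCardEq hS.1⟩
  apply le_antisymm
  · -- ≤ : build a correspondence from an optimal partition
    obtain ⟨f, hf, hmc⟩ := tau_mem hcard
    set R : Set (Δ × B) := {p | f p.2 = e p.1} with hR
    have hA : ∀ t : Δ, ∃ b, (t, b) ∈ R := fun t => hf (e t)
    have hB : ∀ b : B, ∃ t, (t, b) ∈ R := fun b => ⟨e.symm (f b), by simp [hR]⟩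
    have hdis : ∀ p ∈ R, ∀ q ∈ R,
        |dist p.1 q.1 - dist p.2 q.2| ≤ 2 * ((l - tau B k)/2) := by
      rintro ⟨t, x⟩ hp ⟨t', x'⟩ hq
      simp only [hR, Set.mem_setOf_eq] at hp hq
      have harith : 2 * ((l - tau B k)/2) = l - tau B k := by ring
      rw [harith]
      by_cases htt : t = t'
      · subst htt
        have hz : dist t t = (0:ℝ) := dist_self t
        rw [hz, zero_sub, abs_neg, abs_of_nonneg dist_nonneg]
        have := hdist_le_diam x x'
        linarith
      · rw [hS.2 t t' htt]
        have hfxx : f x ≠ f x' := by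
          rw [hp, hq]
          intro hbad
          exact htt (e.injective hbad)
        have h1 : tau B k ≤ dist x x' := by
          rw [← hmc]
          exact minCross_le f hfxx
        have h2 := hdist_le_diam x x'
        rw [abs_of_nonneg (by linarith)]
        linarith
    have := ghDist_le_of_rel R hA hB (ε := (l - tau B k)/2) (by linarith) hdis
    linarith
  · -- ≥
    have key : ∀ δ : ℝ, ghDist Δ B < δ → l - tau B k ≤ 2 * δ := by
      intro δ hδ
      obtain ⟨R, hA, hB, hdis⟩ := exists_rel_of_ghDist_lt hδ
      by_cases hover : ∃ x : B, ∃ t t' : Δ, t ≠ t' ∧ (t, x) ∈ R ∧ (t', x) ∈ R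
      · obtain ⟨x, t, t', htt', h1, h2⟩ := hover
        have hd := hdis _ h1 _ h2
        simp only at hd
        have hz : dist x x = (0:ℝ) := dist_self _
        rw [hz, sub_zero, hS.2 t t' htt', abs_of_pos hl] at hd
        linarith
      · push_neg at hover
        choose gt hgt using hB
        have hguniq : ∀ (t : Δ) (x : B), (t, x) ∈ R → t = gt x := by
          intro t x htx
          by_contra hne
          exact hover x t (gt x) hne htx (hgt x)
        set g : B → Fin (k+1) := fun x => e (gt x) with hg
        have hgsurj : Surjective g := by
          intro i
          obtain ⟨b, hb⟩ := hA (e.symm i)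
          refine ⟨b, ?_⟩
          rw [hg]
          simp only []
          rw [← hguniq _ _ hb]
          simp
        have hmcle : minCross B g ≤ tau B k := le_tau hcard hgsurj
        obtain ⟨x0, y0, hxy0⟩ := exists_cross hk1 hgsurj
        obtain ⟨a, b, hab, habd⟩ := minCross_mem hxy0
        have htab : gt a ≠ gt b := by
          intro hbad
          exact hab (by rw [hg]; simp only []; rw [hbad])
        have hd := hdis _ (hgt a) _ (hgt b)
        simp only at hd
        rw [hS.2 _ _ htab] at hd
        have habs : l - dist a b ≤ |l - dist a b| := le_abs_self _
        have : dist a b ≤ tau B k := by rw [habd]; exact hmcle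
        linarith
    have h00 : (0:ℝ) ≤ ghDist Δ B := dist_nonneg
    apply _root_.le_of_forall_pos_le_add
    intro η hη
    have := key (ghDist Δ B + η/2) (by linarith)
    linarith

end Simplex

end Aux

section MainAux
variable {V : Type} [MetricSpace V] [Fintype V]

lemma sort_length_tree {T : SimpleGraph V} (hT : T.IsTree) :
    ((edgeLengths T).sort (· ≥ ·)).length = Fintype.card V - 1 := by
  have h1 : ((edgeLengths T).sort (· ≥ ·)).length = Multiset.card (edgeLengths T) :=
    Multiset.length_sort _
  have h2 : Multiset.card (edgeLengths T) = (EF T).card := by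
    rw [edgeLengths_eq, Multiset.card_map, ← Finset.card_def]
  have := card_EF_tree hT
  omega

end MainAux

/-- If `X` and `Y` are finite metric spaces whose Gromov–Hausdorff distances to every
simplex `lΔₙ` (`n ≥ 1`, `l ≥ 0`) coincide, then `#X = #Y`, `diam X = diam Y`, and the
mst-spectra of `X` and `Y` coincide (the descending vectors of edge lengths of any
minimal spanning trees on `X` and `Y` are equal). -/
theorem card_diam_spectrum_eq_of_indistinguishable (X Y : Type) [MetricSpace X] [Fintype X]
    [Nonempty X] [MetricSpace Y] [Fintype Y] [Nonempty Y]
    (h : ∀ (n : ℕ), 1 ≤ n → ∀ (l : ℝ), 0 ≤ l →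
      ∀ (Δ : Type) (_ : MetricSpace Δ) (_ : Fintype Δ) (_ : Nonempty Δ),
        IsSimplexOf Δ n l → GromovHausdorff.ghDist Δ X = GromovHausdorff.ghDist Δ Y) :
    Fintype.card X = Fintype.card Y ∧
    Metric.diam (Set.univ : Set X) = Metric.diam (Set.univ : Set Y) ∧
    ∀ (T_X : SimpleGraph X) (T_Y : SimpleGraph Y), IsMST T_X → IsMST T_Y →
      (edgeLengths T_X).sort (· ≥ ·) = (edgeLengths T_Y).sort (· ≥ ·) := by
  classical
  -- diameters
  have hdiam : Metric.diam (Set.univ : Set X) = Metric.diam (Set.univ : Set Y) := by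
    have hP : IsSimplexOf PUnit.{1} 1 0 :=
      ⟨by simp, fun x y hxy => absurd (Subsingleton.elim x y) hxy⟩
    have heq := h 1 le_rfl 0 le_rfl PUnit.{1} inferInstance inferInstance inferInstance hP
    have h1 := ghDist_punit (B := X)
    have h2 := ghDist_punit (B := Y)
    rw [← h1, ← h2, heq]
  have hd0X : (0:ℝ) ≤ Metric.diam (Set.univ : Set X) := Metric.diam_nonneg
  have hd0Y : (0:ℝ) ≤ Metric.diam (Set.univ : Set Y) := Metric.diam_nonneg
  set l : ℝ := 2 * max (Metric.diam (Set.univ : Set X)) (Metric.diam (Set.univ : Set Y)) + 1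
    with hldef
  have hl0 : 0 < l := by
    have := le_max_left (Metric.diam (Set.univ : Set X)) (Metric.diam (Set.univ : Set Y))
    rw [hldef]; linarith
  have hlX : 2 * Metric.diam (Set.univ : Set X) ≤ l := by
    have := le_max_left (Metric.diam (Set.univ : Set X)) (Metric.diam (Set.univ : Set Y))
    rw [hldef]; linarith
  have hlY : 2 * Metric.diam (Set.univ : Set Y) ≤ l := by
    have := le_max_right (Metric.diam (Set.univ : Set X)) (Metric.diam (Set.univ : Set Y))
    rw [hldef]; linarith
  have hcX : 1 ≤ Fintype.card X := Fintype.card_pos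
  have hcY : 1 ≤ Fintype.card Y := Fintype.card_pos
  -- cardinalities
  have hcard : Fintype.card X = Fintype.card Y := by
    by_contra hne
    rcases Nat.lt_or_ge (Fintype.card X) (Fintype.card Y) with hlt | hge
    · set n := Fintype.card X + 1 with hn
      letI iM : MetricSpace (Fin n) := simplexMet n l hl0
      haveI iN : Nonempty (Fin n) := ⟨⟨0, by omega⟩⟩
      have hSimp : IsSimplexOf (Fin n) n l := isSimplexOf_simplexMet n l hl0
      have heq := h n (by omega) l hl0.le (Fin n) iM (Fin.fintype n) iN hSimp
      have hX := le_ghDist_simplex (B := X) hl0 hSimp (by omega)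
      have hY := ghDist_simplex_eq (B := Y) (k := Fintype.card X) hSimp hcX (by omega) hlY
      have htp : 0 < tau Y (Fintype.card X) := tau_pos hcX (by omega)
      rw [heq] at hX
      linarith
    · have hlt : Fintype.card Y < Fintype.card X := by omega
      set n := Fintype.card Y + 1 with hn
      letI iM : MetricSpace (Fin n) := simplexMet n l hl0
      haveI iN : Nonempty (Fin n) := ⟨⟨0, by omega⟩⟩
      have hSimp : IsSimplexOf (Fin n) n l := isSimplexOf_simplexMet n l hl0
      have heq := h n (by omega) l hl0.le (Fin n) iM (Fin.fintype n) iN hSimp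
      have hY := le_ghDist_simplex (B := Y) hl0 hSimp (by omega)
      have hX := ghDist_simplex_eq (B := X) (k := Fintype.card Y) hSimp hcY (by omega) hlX
      have htp : 0 < tau X (Fintype.card Y) := tau_pos hcY (by omega)
      rw [heq] at hX
      linarith
  -- tau invariants
  have htau : ∀ k : ℕ, 1 ≤ k → k + 1 ≤ Fintype.card X → tau X k = tau Y k := by
    intro k hk1 hk
    letI iM : MetricSpace (Fin (k+1)) := simplexMet (k+1) l hl0
    haveI iN : Nonempty (Fin (k+1)) := ⟨⟨0, by omega⟩⟩
    have hSimp : IsSimplexOf (Fin (k+1)) (k+1) l := isSimplexOf_simplexMet (k+1) l hl0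
    have heq := h (k+1) (by omega) l hl0.le (Fin (k+1)) iM (Fin.fintype (k+1)) iN hSimp
    have hX := ghDist_simplex_eq (B := X) (k := k) hSimp hk1 hk hlX
    have hY := ghDist_simplex_eq (B := Y) (k := k) hSimp hk1 (by omega) hlY
    rw [heq] at hX
    linarith
  refine ⟨hcard, hdiam, ?_⟩
  intro TX TY hTX hTY
  have hlenX := sort_length_tree hTX.1
  have hlenY := sort_length_tree hTY.1
  apply List.ext_get (by rw [hlenX, hlenY, hcard])
  intro i h1 h2
  have hiX : i < Fintype.card X - 1 := by omega
  have hgX := mst_sorted_eq_tau hTX (k := i+1) (by omega) (by omega)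
  have hgY := mst_sorted_eq_tau hTY (k := i+1) (by omega) (by omega)
  have htaui := htau (i+1) (by omega) (by omega)
  have hdX : ((edgeLengths TX).sort (· ≥ ·)).getD i 0
      = ((edgeLengths TX).sort (· ≥ ·)).get ⟨i, h1⟩ := List.getD_eq_get _ 0 ⟨i, h1⟩
  have hdY : ((edgeLengths TY).sort (· ≥ ·)).getD i 0
      = ((edgeLengths TY).sort (· ≥ ·)).get ⟨i, h2⟩ := List.getD_eq_get _ 0 ⟨i, h2⟩
  have : i + 1 - 1 = i := by omega
  rw [this] at hgX hgY
  rw [← hdX, ← hdY, hgX, hgY, htaui]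
end
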